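/- arXiv:2008.02587 — 4 statements merged into one kernel-verified Lean document; each statement's English description precedes it below -/
import Mathlib

section
/- Let K be a division ring, k a field contained in the center of K (so that K is a k-algebra with central structure map), and L/k an algebraic Galois field extension such that the k-algebra M = K ⊗_k L is a division ring. Then the map Ψ which sends each σ ∈ Gal(L/k) to the ring automorphism of M determined on pure tensors by h ⊗ x ↦ h ⊗ σ(x) is a group isomorphism from Gal(L/k) onto the group of ring automorphisms of M that fix the subring K ⊗ 1 pointwise. -/
open scoped TensorProduct

set_option maxHeartbeats 1000000
set_option synthInstance.maxHeartbeats 100000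

open Polynomial

section Aux

variable (K : Type*) [DivisionRing K] (k : Type*) [Field k] [Algebra k K]
    (L : Type*) [Field L] [Algebra k L]

lemma stmt0_central (x : L) : (1:K) ⊗ₜ[k] x ∈ Subalgebra.center k (K ⊗[k] L) := by
  rw [Subalgebra.mem_center_iff]
  intro b
  induction b using TensorProduct.induction_on with
  | zero => simp
  | tmul h y => simp [Algebra.TensorProduct.tmul_mul_tmul, mul_comm]
  | add a b ha hb => rw [add_mul, mul_add, ha, hb]

lemma stmt0_nzd (hM : ∀ x : K ⊗[k] L, x ≠ 0 → IsUnit x) : NoZeroDivisors (K ⊗[k] L) := by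
  constructor
  intro a b hab
  by_cases ha : a = 0
  · exact Or.inl ha
  · obtain ⟨u, hu⟩ := hM a ha
    right
    calc b = ↑u⁻¹ * (a * b) := by rw [← hu, ← mul_assoc, u.inv_mul, one_mul]
    _ = 0 := by rw [hab, mul_zero]

lemma stmt0_incl_inj : Function.Injective (fun y : L => ((1:K) ⊗ₜ[k] y : K ⊗[k] L)) := by
  have h : (fun y : L => ((1:K) ⊗ₜ[k] y : K ⊗[k] L)) =
      ((Algebra.TensorProduct.includeRight : L →ₐ[k] K ⊗[k] L) : L → K ⊗[k] L) := rfl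
  rw [h]
  exact RingHom.injective
    ((Algebra.TensorProduct.includeRight : L →ₐ[k] K ⊗[k] L).toRingHom : L →+* K ⊗[k] L)

lemma stmt0_alg_tmul (c : k) :
    (algebraMap k K c) ⊗ₜ[k] (1:L) = (1:K) ⊗ₜ[k] (algebraMap k L c) := by
  rw [Algebra.algebraMap_eq_smul_one, Algebra.algebraMap_eq_smul_one, TensorProduct.smul_tmul]

/-- The key step: an automorphism of `K ⊗[k] L` fixing `K ⊗ 1` pointwise maps `1 ⊗ L`
into itself. -/
lemma stmt0_key [IsGalois k L] [Algebra.IsAlgebraic k L]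
    (hM : ∀ x : K ⊗[k] L, x ≠ 0 → IsUnit x)
    (η : RingAut (K ⊗[k] L)) (hη : ∀ h : K, η (h ⊗ₜ[k] (1 : L)) = h ⊗ₜ[k] (1 : L))
    (x : L) : ∃ y : L, η ((1:K) ⊗ₜ[k] x) = (1:K) ⊗ₜ[k] y := by
  haveI := stmt0_nzd K k L hM
  set Z := Subalgebra.center k (K ⊗[k] L) with hZdef
  haveI hZnt : Nontrivial Z := ⟨0, 1, by
    intro h
    exact zero_ne_one (α := K ⊗[k] L) (congrArg Subtype.val h)⟩
  haveI hZnzd : NoZeroDivisors Z := by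
    constructor
    intro a b hab
    have h0 : (a : K ⊗[k] L) * b = 0 := congrArg Subtype.val hab
    rcases mul_eq_zero.mp h0 with h | h
    · exact Or.inl (Subtype.ext h)
    · exact Or.inr (Subtype.ext h)
  have halg : ∀ c : k, η (algebraMap k (K ⊗[k] L) c) = algebraMap k (K ⊗[k] L) c := by
    intro c
    rw [Algebra.TensorProduct.algebraMap_apply, hη]
  let ηa : (K ⊗[k] L) ≃ₐ[k] (K ⊗[k] L) := AlgEquiv.ofRingEquiv halg
  have hηa : ∀ m, ηa m = η m := fun _ => rfl
  have hrc : η ((1:K) ⊗ₜ[k] x) ∈ Z := by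
    rw [hZdef, Subalgebra.mem_center_iff]
    intro b
    have h1 : η.symm b * ((1:K) ⊗ₜ[k] x) = ((1:K) ⊗ₜ[k] x) * η.symm b :=
      Subalgebra.mem_center_iff.mp (stmt0_central K k L x) (η.symm b)
    calc b * η ((1:K) ⊗ₜ[k] x) = η (η.symm b * ((1:K) ⊗ₜ[k] x)) := by
          rw [map_mul, RingEquiv.apply_symm_apply]
    _ = η (((1:K) ⊗ₜ[k] x) * η.symm b) := by rw [h1]
    _ = η ((1:K) ⊗ₜ[k] x) * b := by rw [map_mul, RingEquiv.apply_symm_apply]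
  set r : Z := ⟨η ((1:K) ⊗ₜ[k] x), hrc⟩ with hrdef
  have hx : IsIntegral k x := Algebra.IsIntegral.isIntegral x
  set f := minpoly k x with hfdef
  have h1 : Polynomial.aeval ((1:K) ⊗ₜ[k] x : K ⊗[k] L) f = 0 := by
    have := Polynomial.aeval_algHom_apply
      (Algebra.TensorProduct.includeRight : L →ₐ[k] K ⊗[k] L) x f
    simpa only [Algebra.TensorProduct.includeRight_apply, hfdef, minpoly.aeval, map_zero]
      using this
  have h2 : Polynomial.aeval (η ((1:K) ⊗ₜ[k] x)) f = 0 := by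
    have := Polynomial.aeval_algHom_apply ηa.toAlgHom ((1:K) ⊗ₜ[k] x) f
    rw [h1, map_zero] at this
    exact this
  have h3 : Polynomial.aeval r f = 0 := by
    apply Subtype.ext
    have h4 := Polynomial.aeval_algHom_apply Z.val r f
    have h5 : Z.val r = η ((1:K) ⊗ₜ[k] x) := rfl
    rw [h5, h2] at h4
    exact h4.symm
  set p := f.map (algebraMap k L) with hpdef
  have hsplit : p.Splits :=
    (Normal.splits inferInstance x)
  have hpmonic : p.Monic := (minpoly.monic hx).map _
  have hp : p = (p.roots.map fun a => X - C a).prod :=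
    hsplit.eq_prod_roots_of_monic hpmonic
  let φ : L →ₐ[k] Z :=
    AlgHom.codRestrict (Algebra.TensorProduct.includeRight : L →ₐ[k] K ⊗[k] L)
      Z (fun y => stmt0_central K k L y)
  have hfZ : f.map (algebraMap k Z) = p.map φ.toRingHom := by
    rw [hpdef, Polynomial.map_map, ← AlgHom.comp_algebraMap φ]
    rfl
  have heval : Polynomial.eval r (p.map φ.toRingHom) = 0 := by
    rw [← hfZ, Polynomial.eval_map, ← Polynomial.aeval_def, h3]
  have hprod : (p.roots.map fun a => r - φ a).prod = 0 := by
    have hmp : p.map φ.toRingHom = (p.roots.map fun a => X - C (φ a)).prod := by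
      conv_lhs => rw [hp]
      rw [Polynomial.map_multiset_prod]
      congr 1
      rw [Multiset.map_map]
      apply Multiset.map_congr rfl
      intro a _
      rw [Function.comp_apply, Polynomial.map_sub, Polynomial.map_X, Polynomial.map_C]
      rfl
    rw [hmp] at heval
    rw [← heval, Polynomial.eval_multiset_prod, Multiset.map_map]
    apply congrArg
    apply Multiset.map_congr rfl
    intro a _
    rw [Function.comp_apply, Polynomial.eval_sub, Polynomial.eval_X, Polynomial.eval_C]
  rw [Multiset.prod_eq_zero_iff, Multiset.mem_map] at hprod
  obtain ⟨a, _, ha⟩ := hprod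
  have hra : r = φ a := by rwa [sub_eq_zero] at ha
  exact ⟨a, congrArg Subtype.val hra⟩

end Aux

/-- Let `K` be a division ring, `k` a field contained in the center of `K`
(so that `K` is a `k`-algebra), and `L/k` an algebraic Galois field extension such that the
`k`-algebra `M = K ⊗[k] L` is a division ring.  Then the map `Ψ` sending `σ ∈ Gal(L/k)` to the
ring automorphism of `M` determined on pure tensors by `h ⊗ x ↦ h ⊗ σ x` is a group isomorphism
from `Gal(L/k)` onto the group of ring automorphisms of `M` fixing `K ⊗ 1` pointwise:
`Ψ` is an injective group homomorphism whose range is exactly the set of automorphisms of `M`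
fixing `K ⊗ 1` pointwise. -/
theorem stmt0 (K : Type*) [DivisionRing K] (k : Type*) [Field k] [Algebra k K]
    (L : Type*) [Field L] [Algebra k L] [IsGalois k L] [Algebra.IsAlgebraic k L]
    (hM : ∀ x : K ⊗[k] L, x ≠ 0 → IsUnit x) :
    ∃ Ψ : (L ≃ₐ[k] L) →* RingAut (K ⊗[k] L),
      (∀ (σ : L ≃ₐ[k] L) (h : K) (x : L), Ψ σ (h ⊗ₜ[k] x) = h ⊗ₜ[k] σ x) ∧
      Function.Injective Ψ ∧
      (∀ η : RingAut (K ⊗[k] L),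
        η ∈ Set.range Ψ ↔ ∀ h : K, η (h ⊗ₜ[k] (1 : L)) = h ⊗ₜ[k] (1 : L)) := by
  classical
  -- the underlying map
  let Φ : (L ≃ₐ[k] L) → RingAut (K ⊗[k] L) := fun σ =>
    (Algebra.TensorProduct.congr (AlgEquiv.refl : K ≃ₐ[k] K) σ).toRingEquiv
  have hΦ : ∀ (σ : L ≃ₐ[k] L) (h : K) (x : L), Φ σ (h ⊗ₜ[k] x) = h ⊗ₜ[k] σ x := by
    intro σ h x
    show (Algebra.TensorProduct.congr (AlgEquiv.refl : K ≃ₐ[k] K) σ) (h ⊗ₜ[k] x)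
      = h ⊗ₜ[k] σ x
    rw [Algebra.TensorProduct.congr_apply, Algebra.TensorProduct.map_tmul]
    rfl
  have hΦmul : ∀ σ τ : L ≃ₐ[k] L, Φ (σ * τ) = Φ σ * Φ τ := by
    intro σ τ
    apply RingEquiv.ext
    intro m
    induction m using TensorProduct.induction_on with
    | zero => simp
    | tmul h x =>
      have hc : (Φ σ * Φ τ) (h ⊗ₜ[k] x) = Φ σ (Φ τ (h ⊗ₜ[k] x)) := rfl
      rw [hc, hΦ, hΦ, hΦ]
      rfl
    | add a b ha hb => rw [map_add, map_add, ha, hb]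
  let Ψ : (L ≃ₐ[k] L) →* RingAut (K ⊗[k] L) := MonoidHom.mk' Φ hΦmul
  have injL := stmt0_incl_inj K k L
  refine ⟨Ψ, hΦ, ?_, ?_⟩
  · -- injectivity
    intro σ τ h
    apply AlgEquiv.ext
    intro x
    apply injL
    show (1:K) ⊗ₜ[k] σ x = (1:K) ⊗ₜ[k] τ x
    rw [← hΦ σ 1 x, ← hΦ τ 1 x]
    exact congrFun (congrArg (fun e : RingAut (K ⊗[k] L) => (e : K ⊗[k] L → K ⊗[k] L)) h) _
  · -- range characterization
    intro η
    constructor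
    · rintro ⟨σ, rfl⟩ h
      show Φ σ (h ⊗ₜ[k] 1) = h ⊗ₜ[k] 1
      rw [hΦ, map_one]
    · intro hη
      have key := stmt0_key K k L hM η hη
      choose s hs using key
      have hone : s 1 = 1 := by
        apply injL
        show (1:K) ⊗ₜ[k] s 1 = (1:K) ⊗ₜ[k] 1
        rw [← hs]
        have : ((1:K) ⊗ₜ[k] (1:L) : K ⊗[k] L) = 1 := rfl
        rw [this, map_one]
      have hmul : ∀ a b : L, s (a * b) = s a * s b := by
        intro a b
        apply injL
        show (1:K) ⊗ₜ[k] s (a * b) = (1:K) ⊗ₜ[k] (s a * s b)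
        have h1 : ((1:K) ⊗ₜ[k] (a * b) : K ⊗[k] L) = ((1:K) ⊗ₜ[k] a) * ((1:K) ⊗ₜ[k] b) := by
          rw [Algebra.TensorProduct.tmul_mul_tmul, one_mul]
        have h2 : ((1:K) ⊗ₜ[k] (s a * s b) : K ⊗[k] L)
            = ((1:K) ⊗ₜ[k] s a) * ((1:K) ⊗ₜ[k] s b) := by
          rw [Algebra.TensorProduct.tmul_mul_tmul, one_mul]
        rw [← hs, h1, map_mul, hs, hs, h2]
      have hzero : s 0 = 0 := by
        apply injL
        show (1:K) ⊗ₜ[k] s 0 = (1:K) ⊗ₜ[k] 0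
        rw [← hs, TensorProduct.tmul_zero, map_zero]
      have hadd : ∀ a b : L, s (a + b) = s a + s b := by
        intro a b
        apply injL
        show (1:K) ⊗ₜ[k] s (a + b) = (1:K) ⊗ₜ[k] (s a + s b)
        rw [← hs, TensorProduct.tmul_add, map_add, hs, hs, TensorProduct.tmul_add]
      have hcomm : ∀ c : k, s (algebraMap k L c) = algebraMap k L c := by
        intro c
        apply injL
        show (1:K) ⊗ₜ[k] s (algebraMap k L c) = (1:K) ⊗ₜ[k] algebraMap k L c
        rw [← hs, ← stmt0_alg_tmul, hη, stmt0_alg_tmul]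
      let σ₀ : L →ₐ[k] L :=
        { toFun := s, map_one' := hone, map_mul' := hmul, map_zero' := hzero,
          map_add' := hadd, commutes' := hcomm }
      have hbij : Function.Bijective σ₀ := Algebra.IsAlgebraic.algHom_bijective σ₀
      let σe : L ≃ₐ[k] L := AlgEquiv.ofBijective σ₀ hbij
      refine ⟨σe, ?_⟩
      apply RingEquiv.ext
      intro m
      show Φ σe m = η m
      induction m using TensorProduct.induction_on with
      | zero => simp
      | tmul h x =>
        rw [hΦ]
        have hσe : σe x = s x := rfl
        have hsplit : (h ⊗ₜ[k] x : K ⊗[k] L) = (h ⊗ₜ[k] (1:L)) * ((1:K) ⊗ₜ[k] x) := by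
          rw [Algebra.TensorProduct.tmul_mul_tmul, mul_one, one_mul]
        rw [hσe, hsplit, map_mul, hη, hs, Algebra.TensorProduct.tmul_mul_tmul, mul_one, one_mul]
      | add a b ha hb => rw [map_add, map_add, ha, hb]
end

section
/- Let K be a division ring, k a field contained in the center of K, and L/k an algebraic Galois field extension such that M = K ⊗_k L is a division ring. Then every ring automorphism η of M fixing K ⊗ 1 pointwise satisfies η(1 ⊗ L) = 1 ⊗ L, and the map σ_η : L → L defined by η(1 ⊗ l) = 1 ⊗ σ_η(l) is a k-algebra automorphism of L, i.e., an element of Gal(L/k). -/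
open scoped TensorProduct

open Polynomial in
private lemma stmt1_central (K : Type*) [DivisionRing K] (k : Type*) [Field k] [Algebra k K]
    (L : Type*) [Field L] [Algebra k L] (l : L) (m : K ⊗[k] L) :
    Commute ((1 : K) ⊗ₜ[k] l) m := by
  induction m using TensorProduct.induction_on with
  | zero => exact Commute.zero_right _
  | tmul a b =>
      simp only [Commute, SemiconjBy, Algebra.TensorProduct.tmul_mul_tmul, one_mul, mul_one,
        mul_comm]
  | add a b ha hb => exact ha.add_right hb

open Polynomial in
private lemma stmt1_key (K : Type*) [DivisionRing K] (k : Type*) [Field k] [Algebra k K]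
    (L : Type*) [Field L] [Algebra k L] [IsGalois k L] [Algebra.IsAlgebraic k L]
    [Nontrivial (K ⊗[k] L)]
    (hM : ∀ x : K ⊗[k] L, x ≠ 0 → IsUnit x)
    (η : RingAut (K ⊗[k] L))
    (hη : ∀ h : K, η (h ⊗ₜ[k] (1 : L)) = h ⊗ₜ[k] (1 : L))
    (l : L) : ∃ r : L, η ((1 : K) ⊗ₜ[k] l) = (1 : K) ⊗ₜ[k] r := by
  set M := K ⊗[k] L
  set f : L →ₐ[k] M := Algebra.TensorProduct.includeRight
  have hfl : ∀ l' : L, f l' = (1 : K) ⊗ₜ[k] l' := fun _ => rfl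
  -- η fixes the image of k
  have halg : ∀ c : k, η (algebraMap k M c) = algebraMap k M c := by
    intro c
    rw [Algebra.TensorProduct.algebraMap_apply, hη]
  set x : M := η ((1 : K) ⊗ₜ[k] l) with hx
  -- x is central
  have hxc : ∀ m : M, Commute m x := by
    intro m
    have h1 : Commute (η.symm m) ((1 : K) ⊗ₜ[k] l) :=
      (stmt1_central K k L l (η.symm m)).symm
    have := h1.map (η : (K ⊗[k] L) →+* (K ⊗[k] L))
    simpa using this
  have hint : IsIntegral k l := (Algebra.IsIntegral.isIntegral l)
  set p := minpoly k l with hp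
  have pm : p.Monic := minpoly.monic hint
  -- aeval of x
  have h1 : Polynomial.aeval ((1 : K) ⊗ₜ[k] l) p = 0 := by
    rw [← hfl, Polynomial.aeval_algHom_apply, minpoly.aeval, map_zero]
  have h2 : Polynomial.aeval x p = 0 := by
    have heq := Polynomial.hom_eval₂ p (algebraMap k M) (η : (K ⊗[k] L) →+* (K ⊗[k] L))
      ((1 : K) ⊗ₜ[k] l)
    have hcomp : (η : (K ⊗[k] L) →+* (K ⊗[k] L)).comp (algebraMap k M) = algebraMap k M :=
      RingHom.ext halg
    rw [hcomp] at heq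
    have h1' : (η : (K ⊗[k] L) →+* (K ⊗[k] L))
        (eval₂ (algebraMap k M) ((1 : K) ⊗ₜ[k] l) p) = 0 := by
      rw [← Polynomial.aeval_def, h1, map_zero]
    rw [Polynomial.aeval_def, hx]
    exact heq.symm.trans h1'
  -- p splits in L
  have hsplit : Splits (p.map (algebraMap k L)) := Normal.splits inferInstance l
  set q := p.map (algebraMap k L) with hq
  have qm : q.Monic := pm.map _
  have hqsplit : Splits q := by
    exact hsplit
  have hqprod : q = (q.roots.map fun a => X - C a).prod :=
    hqsplit.eq_prod_roots_of_monic qm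
  set s : List L := q.roots.toList with hs
  have hqprod' : q = (s.map fun a => X - C a).prod := by
    rw [hqprod, ← Multiset.coe_toList q.roots, Multiset.map_coe, Multiset.prod_coe]
  -- evaluate
  have h3 : eval₂ (f : L →+* M) x q = (s.map fun a => x - (1 : K) ⊗ₜ[k] a).prod := by
    conv_lhs => rw [hqprod']
    clear hqprod' hs
    induction s with
    | nil => simp
    | cons a t ih =>
        rw [List.map_cons, List.prod_cons, List.map_cons, List.prod_cons,
          eval₂_mul_noncomm _ _ (fun n => hxc _), ← ih]
        congr 1
        rw [eval₂_sub, eval₂_X, eval₂_C]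
        rfl
  have h4 : (s.map fun a => x - (1 : K) ⊗ₜ[k] a).prod = 0 := by
    rw [← h3, hq, eval₂_map, AlgHom.comp_algebraMap, ← Polynomial.aeval_def, h2]
  -- some factor must vanish
  have h5 : ∀ t : List L, ((t.map fun a => x - (1 : K) ⊗ₜ[k] a).prod = 0) →
      ∃ a ∈ t, x = (1 : K) ⊗ₜ[k] a := by
    intro t
    induction t with
    | nil => intro h; simp at h
    | cons a t ih =>
        intro h
        rw [List.map_cons, List.prod_cons] at h
        by_cases hz : x - (1 : K) ⊗ₜ[k] a = 0
        · exact ⟨a, List.mem_cons_self (a := a) (l := t), sub_eq_zero.mp hz⟩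
        · obtain ⟨u, hu⟩ := hM _ hz
          have hrest : (t.map fun a => x - (1 : K) ⊗ₜ[k] a).prod = 0 := by
            have := congrArg (fun y => (↑u⁻¹ : M) * y) h
            simpa [← hu, ← mul_assoc] using this
          obtain ⟨b, hb, hxb⟩ := ih hrest
          exact ⟨b, List.mem_cons_of_mem a hb, hxb⟩
  obtain ⟨a, _, ha⟩ := h5 s h4
  exact ⟨a, ha⟩

/-- Let `K` be a division ring, `k` a field contained in the center of `K`,
and `L/k` an algebraic Galois field extension such that `M = K ⊗[k] L` is a division ring.
Then every ring automorphism `η` of `M` fixing `K ⊗ 1` pointwise satisfies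
`η(1 ⊗ L) = 1 ⊗ L`, and the induced map `σ_η : L → L`, defined by
`η (1 ⊗ l) = 1 ⊗ σ_η l`, is a `k`-algebra automorphism of `L`, i.e. an element of
`Gal(L/k)`. -/
theorem stmt1 (K : Type*) [DivisionRing K] (k : Type*) [Field k] [Algebra k K]
    (L : Type*) [Field L] [Algebra k L] [IsGalois k L] [Algebra.IsAlgebraic k L]
    (hM : ∀ x : K ⊗[k] L, x ≠ 0 → IsUnit x)
    (η : RingAut (K ⊗[k] L))
    (hη : ∀ h : K, η (h ⊗ₜ[k] (1 : L)) = h ⊗ₜ[k] (1 : L)) :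
    (η '' {m : K ⊗[k] L | ∃ l : L, m = (1 : K) ⊗ₜ[k] l}
        = {m : K ⊗[k] L | ∃ l : L, m = (1 : K) ⊗ₜ[k] l}) ∧
    ∃ σ : L ≃ₐ[k] L, ∀ l : L, η ((1 : K) ⊗ₜ[k] l) = (1 : K) ⊗ₜ[k] σ l := by
  by_cases hsub : Subsingleton (K ⊗[k] L)
  · refine ⟨?_, ⟨AlgEquiv.refl, fun l => Subsingleton.elim _ _⟩⟩
    ext m
    simp only [Set.mem_image, Set.mem_setOf_eq]
    constructor
    · rintro ⟨n, ⟨l, rfl⟩, rfl⟩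
      exact ⟨l, Subsingleton.elim _ _⟩
    · rintro ⟨l, rfl⟩
      exact ⟨(1 : K) ⊗ₜ[k] l, ⟨l, rfl⟩, Subsingleton.elim _ _⟩
  haveI : Nontrivial (K ⊗[k] L) := not_subsingleton_iff_nontrivial.mp hsub
  have hη' : ∀ h : K, η.symm (h ⊗ₜ[k] (1 : L)) = h ⊗ₜ[k] (1 : L) := by
    intro h
    apply η.injective
    rw [RingEquiv.apply_symm_apply, hη]
  -- injectivity of l ↦ 1 ⊗ l
  have finj : Function.Injective (fun l : L => (1 : K) ⊗ₜ[k] l) := by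
    have : (fun l : L => (1 : K) ⊗ₜ[k] l)
        = (Algebra.TensorProduct.includeRight : L →ₐ[k] K ⊗[k] L) := rfl
    rw [this]
    exact (Algebra.TensorProduct.includeRight : L →ₐ[k] K ⊗[k] L).toRingHom.injective
  choose σf hσf using stmt1_key K k L hM η hη
  choose τf hτf using stmt1_key K k L hM η.symm hη'
  have hτσ : ∀ l : L, τf (σf l) = l := by
    intro l
    apply finj
    show (1 : K) ⊗ₜ[k] τf (σf l) = (1 : K) ⊗ₜ[k] l
    rw [← hτf, ← hσf, RingEquiv.symm_apply_apply]
  have hστ : ∀ l : L, σf (τf l) = l := by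
    intro l
    apply finj
    show (1 : K) ⊗ₜ[k] σf (τf l) = (1 : K) ⊗ₜ[k] l
    rw [← hσf, ← hτf, RingEquiv.apply_symm_apply]
  refine ⟨?_, ⟨{
      toFun := σf
      invFun := τf
      left_inv := hτσ
      right_inv := hστ
      map_mul' := ?_
      map_add' := ?_
      commutes' := ?_ }, hσf⟩⟩
  · ext m
    simp only [Set.mem_image, Set.mem_setOf_eq]
    constructor
    · rintro ⟨n, ⟨l, rfl⟩, rfl⟩
      exact ⟨σf l, hσf l⟩
    · rintro ⟨l, rfl⟩
      exact ⟨(1 : K) ⊗ₜ[k] τf l, ⟨τf l, rfl⟩, by rw [← hτf, RingEquiv.apply_symm_apply]⟩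
  · intro a b
    apply finj
    show (1 : K) ⊗ₜ[k] σf (a * b) = (1 : K) ⊗ₜ[k] (σf a * σf b)
    rw [← hσf]
    have : (1 : K) ⊗ₜ[k] (a * b) = ((1 : K) ⊗ₜ[k] a) * ((1 : K) ⊗ₜ[k] b) := by
      rw [Algebra.TensorProduct.tmul_mul_tmul, one_mul]
    rw [this, map_mul, hσf, hσf, Algebra.TensorProduct.tmul_mul_tmul, one_mul]
  · intro a b
    apply finj
    show (1 : K) ⊗ₜ[k] σf (a + b) = (1 : K) ⊗ₜ[k] (σf a + σf b)
    rw [← hσf, TensorProduct.tmul_add, TensorProduct.tmul_add, map_add, hσf, hσf]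
  · intro c
    apply finj
    show (1 : K) ⊗ₜ[k] σf (algebraMap k L c) = (1 : K) ⊗ₜ[k] (algebraMap k L c)
    rw [← hσf]
    have h1 : (1 : K) ⊗ₜ[k] (algebraMap k L c) = algebraMap k (K ⊗[k] L) c :=
      ((Algebra.TensorProduct.includeRight : L →ₐ[k] K ⊗[k] L).commutes c)
    rw [h1, Algebra.TensorProduct.algebraMap_apply, hη]
end

section
/- Let K be a division ring, k a field contained in the center of K, and L/k an algebraic Galois field extension such that M = K ⊗_k L is a division ring. Then the extension M/K is Galois in the sense of skew fields: every element of M that is fixed by all ring automorphisms of M fixing K ⊗ 1 pointwise belongs to K ⊗ 1. -/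
open scoped TensorProduct

/-- An element of an algebraic Galois extension fixed by every automorphism lies in the
base field. -/
lemma stmt2_aux_fixed {k L : Type*} [Field k] [Field L] [Algebra k L] [IsGalois k L]
    [Algebra.IsAlgebraic k L] {x : L} (hx : ∀ σ : L ≃ₐ[k] L, σ x = x) :
    ∃ c : k, algebraMap k L c = x := by
  classical
  have halg : IsAlgebraic k x := Algebra.IsAlgebraic.isAlgebraic x
  have hint : IsIntegral k x := halg.isIntegral
  have hsep : (minpoly k x).Separable := Algebra.IsSeparable.isSeparable k x
  have hsplit : (((minpoly k x).map (algebraMap k L)).Splits) := Normal.splits inferInstance x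
  have hroot : (minpoly k x).rootSet L = {x} := by
    ext y
    constructor
    · intro hy
      have h_ev : (Polynomial.aeval y) (minpoly k x) = 0 :=
        (Polynomial.mem_rootSet.mp hy).2
      obtain ⟨σ, hσ⟩ := minpoly.exists_algEquiv_of_root halg h_ev
      have hfix : σ x = x := hx σ
      have hyx : y = x := σ.injective (by rw [hσ]; exact hfix.symm)
      simp [hyx]
    · intro hy
      have hy' : y = x := hy
      subst hy'
      refine Polynomial.mem_rootSet.mpr ⟨minpoly.ne_zero hint, minpoly.aeval k y⟩
  have hcard := Polynomial.card_rootSet_eq_natDegree hsep hsplit (K := L)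
  have hone : Fintype.card ((minpoly k x).rootSet L) = 1 := by
    have hxmem : x ∈ (minpoly k x).rootSet L := by rw [hroot]; exact Set.mem_singleton x
    refine Fintype.card_eq_one_iff.mpr ⟨⟨x, hxmem⟩, ?_⟩
    rintro ⟨y, hy⟩
    rw [hroot] at hy
    exact Subtype.ext hy
  have hdeg : (minpoly k x).degree = 1 := by
    rw [Polynomial.degree_eq_natDegree (minpoly.ne_zero hint), ← hcard, hone]
    norm_cast
  obtain ⟨c, hc⟩ := (minpoly.degree_eq_one_iff).mp hdeg
  exact ⟨c, hc⟩

/-- Let `K` be a division ring, `k` a field contained in the center of `K`,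
and `L/k` an algebraic Galois field extension such that `M = K ⊗[k] L` is a division ring.
Then the extension `M/K` is Galois in the sense of skew fields: every element of `M` fixed by
all ring automorphisms of `M` fixing `K ⊗ 1` pointwise belongs to `K ⊗ 1`. -/
theorem stmt2 (K : Type*) [DivisionRing K] (k : Type*) [Field k] [Algebra k K]
    (L : Type*) [Field L] [Algebra k L] [IsGalois k L] [Algebra.IsAlgebraic k L]
    (hM : ∀ x : K ⊗[k] L, x ≠ 0 → IsUnit x)
    (m : K ⊗[k] L)
    (hm : ∀ η : RingAut (K ⊗[k] L),
      (∀ h : K, η (h ⊗ₜ[k] (1 : L)) = h ⊗ₜ[k] (1 : L)) → η m = m) :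
    ∃ h : K, m = h ⊗ₜ[k] (1 : L) := by
  classical
  set ι := Module.Basis.ofVectorSpaceIndex k K with hι
  set b : Module.Basis ι k K := Module.Basis.ofVectorSpace k K with hb
  set B : Module.Basis ι L (L ⊗[k] K) := Algebra.TensorProduct.basis L b with hB
  set F : K ⊗[k] L → (ι →₀ L) :=
    fun x => B.repr ((TensorProduct.comm k K L) x) with hF
  have hFinj : Function.Injective F := by
    intro x y hxy
    have := B.repr.injective hxy
    exact (TensorProduct.comm k K L).injective this
  -- key: F intertwines (id ⊗ σ) with mapRange σ
  have key : ∀ (σ : L ≃ₐ[k] L) (x : K ⊗[k] L),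
      F (Algebra.TensorProduct.map (AlgHom.id k K) σ.toAlgHom x)
        = Finsupp.mapRange σ (map_zero σ) (F x) := by
    intro σ x
    induction x using TensorProduct.induction_on with
    | zero => simp [hF]
    | tmul a l =>
        simp only [hF, Algebra.TensorProduct.map_tmul, AlgHom.coe_id, id_eq,
          AlgEquiv.toAlgHom_eq_coe, AlgHom.coe_coe, TensorProduct.comm_tmul,
          hB, Algebra.TensorProduct.basis_repr_tmul]
        ext i
        simp [Algebra.smul_def, map_mul, AlgEquiv.commutes]
    | add x y hx hy =>
        simp only [map_add, hF] at hx hy ⊢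
        rw [hx, hy, Finsupp.mapRange_add (map_add σ)]
  -- m is fixed by id ⊗ σ for every σ
  have hfix : ∀ σ : L ≃ₐ[k] L,
      Algebra.TensorProduct.map (AlgHom.id k K) σ.toAlgHom m = m := by
    intro σ
    have := hm (Algebra.TensorProduct.congr (AlgEquiv.refl (R := k) (A₁ := K)) σ).toRingEquiv
      (fun h => by
        simp [Algebra.TensorProduct.congr_apply, Algebra.TensorProduct.map_tmul])
    simpa [Algebra.TensorProduct.congr_apply] using this
  -- hence every coefficient of F m is fixed by every σ
  have hcoef : ∀ i : ι, ∃ c : k, algebraMap k L c = F m i := by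
    intro i
    apply stmt2_aux_fixed
    intro σ
    have := key σ m
    rw [hfix σ] at this
    simpa using (DFunLike.congr_fun this i).symm
  -- build the element of k-coefficients
  let g : L → k := fun y => if h : ∃ c : k, algebraMap k L c = y then h.choose else 0
  have hg0 : g 0 = 0 := by
    have h0 : ∃ c : k, algebraMap k L c = (0 : L) := ⟨0, map_zero _⟩
    simp only [g, dif_pos h0]
    exact (algebraMap k L).injective (by rw [h0.choose_spec, map_zero])
  set c : ι →₀ k := Finsupp.mapRange g hg0 (F m) with hc
  have hcm : Finsupp.mapRange (algebraMap k L) (map_zero _) c = F m := by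
    ext i
    simp only [Finsupp.mapRange_apply, hc]
    obtain ⟨d, hd⟩ := hcoef i
    have hex : ∃ e : k, algebraMap k L e = F m i := ⟨d, hd⟩
    simp only [g, dif_pos hex]
    exact hex.choose_spec
  refine ⟨b.repr.symm c, ?_⟩
  apply hFinj
  have hFc : F ((b.repr.symm c) ⊗ₜ[k] (1 : L))
      = Finsupp.mapRange (algebraMap k L) (map_zero _) c := by
    simp only [hF, TensorProduct.comm_tmul, hB, Algebra.TensorProduct.basis_repr_tmul,
      one_smul, LinearEquiv.apply_symm_apply]
  rw [hFc, hcm]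
end

section
/- Let H be a division ring, k a field contained in the center of H, and (G_n, s_n)_{n ∈ ℕ} a complete system of finite groups. Let (L_n)_{n ∈ ℕ} be an increasing tower of finite Galois extensions of k, with isomorphisms ε_n : G_n ≅ Gal(L_n/k) satisfying ε_n ∘ s_{n+1} = res ∘ ε_{n+1} for all n, and set L = ⋃_n L_n. Assume that H ⊗_k L_n is a division ring for every n. Then M = H ⊗_k L is a division ring, and the group of ring automorphisms of M fixing H ⊗ 1 pointwise is isomorphic to the inverse limit lim← G_n of the system (G_n, s_n). -/
open scoped TensorProduct

set_option synthInstance.maxHeartbeats 400000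
set_option maxHeartbeats 1000000

/-- The inverse (projective) limit of a complete system of groups `(Gₙ, sₙ)`, realized as the
subgroup of the product `Π n, Gₙ` consisting of the compatible sequences. -/
def inverseLimit (G : ℕ → Type*) [∀ n, Group (G n)] (s : ∀ n, G (n + 1) →* G n) :
    Subgroup (∀ n, G n) where
  carrier := {f | ∀ n, s n (f (n + 1)) = f n}
  one_mem' := by intro n; simp
  mul_mem' := by intro a b ha hb n; simp [ha n, hb n]
  inv_mem' := by intro a ha n; simp [ha n]

/-- The group of ring automorphisms of a ring `M` fixing pointwise the image of a ring
homomorphism `i : K →+* M`. -/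
def fixingAutGroup {K M : Type*} [Ring K] [Ring M] (i : K →+* M) : Subgroup (RingAut M) where
  carrier := {η | ∀ h : K, η (i h) = i h}
  one_mem' := fun _ => rfl
  mul_mem' := fun {a b} ha hb h => by
    show a (b (i h)) = i h
    rw [hb h, ha h]
  inv_mem' := fun {a} ha h => by
    show a⁻¹ (i h) = i h
    conv_lhs => rw [← ha h]
    exact a.symm_apply_apply (i h)

set_option synthInstance.maxHeartbeats 1000000

section AuxDiv
variable {k : Type*} [Field k] {H : Type*} [DivisionRing H] [Algebra k H]

theorem div_aux {Ω : Type*} [Field Ω] [Algebra k Ω] (Ln : ℕ → IntermediateField k Ω)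
    (hmono : Monotone Ln)
    (hdiv : ∀ n, ∀ x : H ⊗[k] (Ln n), x ≠ 0 → IsUnit x) :
    ∀ x : H ⊗[k] ↥(⨆ n, Ln n), x ≠ 0 → IsUnit x := by
  have hle : ∀ n, Ln n ≤ ⨆ n, Ln n := fun n => le_iSup Ln n
  let φ : ∀ n, H ⊗[k] (Ln n) →ₐ[k] H ⊗[k] ↥(⨆ n, Ln n) := fun n =>
    Algebra.TensorProduct.map (AlgHom.id k H) (IntermediateField.inclusion (hle n))
  have hφmono : ∀ m n (h : m ≤ n) (y : H ⊗[k] (Ln m)),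
      φ m y = φ n (Algebra.TensorProduct.map (AlgHom.id k H)
        (IntermediateField.inclusion (hmono h)) y) := by
    intro m n h y
    induction y using TensorProduct.induction_on with
    | zero => simp
    | tmul a b =>
        simp only [φ, Algebra.TensorProduct.map_tmul, AlgHom.coe_id, id_eq]
        congr 1
    | add u v hu hv => simp only [map_add, hu, hv]
  have hcover : ∀ x : H ⊗[k] ↥(⨆ n, Ln n), ∃ n y, φ n y = x := by
    intro x
    induction x using TensorProduct.induction_on with
    | zero => exact ⟨0, 0, by simp⟩
    | tmul a b =>
        have hb : (b : Ω) ∈ (⋃ n, (Ln n : Set Ω)) := by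
          rw [← IntermediateField.coe_iSup_of_directed hmono.directed_le]
          exact b.2
        obtain ⟨_, ⟨n, rfl⟩, hn⟩ := hb
        refine ⟨n, a ⊗ₜ ⟨(b : Ω), hn⟩, ?_⟩
        simp only [φ, Algebra.TensorProduct.map_tmul, AlgHom.coe_id, id_eq]
        congr 1
    | add u v hu hv =>
        obtain ⟨m, y, rfl⟩ := hu
        obtain ⟨n, z, rfl⟩ := hv
        refine ⟨max m n, Algebra.TensorProduct.map (AlgHom.id k H)
            (IntermediateField.inclusion (hmono (le_max_left m n))) y +
          Algebra.TensorProduct.map (AlgHom.id k H)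
            (IntermediateField.inclusion (hmono (le_max_right m n))) z, ?_⟩
        rw [map_add, ← hφmono m _ (le_max_left m n), ← hφmono n _ (le_max_right m n)]
  intro x hx
  obtain ⟨n, y, rfl⟩ := hcover x
  have hy : y ≠ 0 := by rintro rfl; simp at hx
  exact (hdiv n y hy).map (φ n).toRingHom

end AuxDiv

section AuxRes
variable {k Ω : Type*} [Field k] [Field Ω] [Algebra k Ω]

noncomputable def resAut {E F : IntermediateField k Ω} (h : E ≤ F) [Normal k E] :
    (F ≃ₐ[k] F) →* (E ≃ₐ[k] E) :=
  letI : Algebra E F := (IntermediateField.inclusion h).toAlgebra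
  haveI : IsScalarTower k E F := IsScalarTower.of_algebraMap_eq fun _ => rfl
  AlgEquiv.restrictNormalHom (F := k) (K₁ := F) E

theorem resAut_coe {E F : IntermediateField k Ω} (h : E ≤ F) [Normal k E]
    (σ : F ≃ₐ[k] F) (x : Ω) (hx : x ∈ E) :
    ((resAut h σ ⟨x, hx⟩ : E) : Ω) = ((σ ⟨x, h hx⟩ : F) : Ω) := by
  letI : Algebra E F := (IntermediateField.inclusion h).toAlgebra
  haveI : IsScalarTower k E F := IsScalarTower.of_algebraMap_eq fun _ => rfl
  have hcomm := AlgEquiv.restrictNormal_commutes σ E ⟨x, hx⟩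
  have h0 : resAut h σ ⟨x, hx⟩ = σ.restrictNormal E ⟨x, hx⟩ := rfl
  rw [h0]
  have h2 : ∀ y : E, ((algebraMap E F y : F) : Ω) = (y : Ω) := fun y => rfl
  calc ((σ.restrictNormal E ⟨x, hx⟩ : E) : Ω)
      = ((algebraMap E F (σ.restrictNormal E ⟨x, hx⟩) : F) : Ω) := (h2 _).symm
    _ = ((σ (algebraMap E F ⟨x, hx⟩) : F) : Ω) := by rw [hcomm]
    _ = ((σ ⟨x, h hx⟩ : F) : Ω) := by congr 2
end AuxRes

theorem galLimit {k Ω : Type*} [Field k] [Field Ω] [Algebra k Ω]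
    (G : ℕ → Type*) [∀ n, Group (G n)]
    (s : ∀ n, G (n + 1) →* G n)
    (Ln : ℕ → IntermediateField k Ω) (hmono : Monotone Ln)
    (hgal : ∀ n, IsGalois k (Ln n))
    (ε : ∀ n, G n ≃* ((Ln n) ≃ₐ[k] (Ln n)))
    (hε : ∀ (n : ℕ) (g : G (n + 1)) (x : Ω) (hx : x ∈ Ln n),
      ((ε n (s n g) ⟨x, hx⟩ : Ln n) : Ω)
        = ((ε (n + 1) g ⟨x, hmono (Nat.le_succ n) hx⟩ : Ln (n + 1)) : Ω)) :
    Nonempty ((↥(⨆ n, Ln n) ≃ₐ[k] ↥(⨆ n, Ln n)) ≃* inverseLimit G s) := by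
  haveI : ∀ n, Normal k (Ln n) := fun n => (hgal n).to_normal
  have hle : ∀ n, Ln n ≤ ⨆ n, Ln n := fun n => le_iSup Ln n
  have hmem_sup : ∀ x : Ω, x ∈ (⨆ n, Ln n : IntermediateField k Ω) → ∃ n, x ∈ Ln n := by
    intro x hx
    have : x ∈ (⋃ n, (Ln n : Set Ω)) := by
      rwa [← IntermediateField.coe_iSup_of_directed hmono.directed_le]
    obtain ⟨_, ⟨n, rfl⟩, hn⟩ := this
    exact ⟨n, hn⟩
  let Φ : (↥(⨆ n, Ln n) ≃ₐ[k] ↥(⨆ n, Ln n)) →* (∀ n, G n) :=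
    Pi.monoidHom fun n => ((ε n).symm.toMonoidHom.comp (resAut (hle n)))
  -- membership
  have hΦmem : ∀ σ, Φ σ ∈ inverseLimit G s := by
    intro σ
    show ∀ n, s n ((ε (n+1)).symm (resAut (hle (n+1)) σ)) = (ε n).symm (resAut (hle n) σ)
    intro n
    have key : (ε n) (s n ((ε (n+1)).symm (resAut (hle (n+1)) σ))) = resAut (hle n) σ := by
      apply AlgEquiv.ext
      rintro ⟨x, hx⟩
      apply Subtype.coe_injective
      show ((ε n (s n ((ε (n+1)).symm (resAut (hle (n+1)) σ))) ⟨x, hx⟩ : Ln n) : Ω)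
        = ((resAut (hle n) σ ⟨x, hx⟩ : Ln n) : Ω)
      rw [hε n _ x hx, MulEquiv.apply_symm_apply]
      rw [resAut_coe (hle (n+1)) σ x (hmono (Nat.le_succ n) hx), resAut_coe (hle n) σ x hx]
    have := congrArg (ε n).symm key
    rwa [MulEquiv.symm_apply_apply] at this
  -- injectivity
  have hΦinj : Function.Injective Φ := by
    intro σ τ hστ
    apply AlgEquiv.ext
    rintro ⟨x, hx⟩
    obtain ⟨n, hn⟩ := hmem_sup x hx
    have h1 : resAut (hle n) σ = resAut (hle n) τ := by
      have := congrFun hστ n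
      have h2 : ((ε n).symm (resAut (hle n) σ)) = ((ε n).symm (resAut (hle n) τ)) := this
      exact (ε n).symm.injective h2
    apply Subtype.coe_injective
    show ((σ ⟨x, hx⟩ : ↥(⨆ n, Ln n)) : Ω) = ((τ ⟨x, hx⟩ : ↥(⨆ n, Ln n)) : Ω)
    have e1 := resAut_coe (hle n) σ x hn
    have e2 := resAut_coe (hle n) τ x hn
    have hxx : (⟨x, hx⟩ : ↥(⨆ n, Ln n)) = ⟨x, hle n hn⟩ := rfl
    rw [hxx, ← e1, ← e2, h1]
  -- surjectivity construction
  have hΦsurj : ∀ g ∈ inverseLimit G s, ∃ σ, Φ σ = g := by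
    intro g hg
    have hg' : ∀ n, s n (g (n+1)) = g n := hg
    have agree : ∀ m n (h : m ≤ n) (x : Ω) (hx : x ∈ Ln m),
        ((ε m (g m) ⟨x, hx⟩ : Ln m) : Ω) = ((ε n (g n) ⟨x, hmono h hx⟩ : Ln n) : Ω) := by
      intro m n h
      induction n, h using Nat.le_induction with
      | base => intro x hx; rfl
      | succ n hmn ih =>
          intro x hx
          rw [ih x hx]
          have hh := hε n (g (n+1)) x (hmono hmn hx)
          rw [hg' n] at hh
          exact hh
    -- glue
    let K : ℕ → Subalgebra k Ω := fun n => (Ln n).toSubalgebra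
    have dir : Directed (· ≤ ·) K := fun i j =>
      ⟨max i j, fun x hx => hmono (le_max_left i j) hx, fun x hx => hmono (le_max_right i j) hx⟩
    let f : ∀ n, (Ln n) →ₐ[k] ↥(⨆ n, Ln n) := fun n =>
      (IntermediateField.inclusion (hle n)).comp (ε n (g n)).toAlgHom
    have hf : ∀ (i j : ℕ) (h : K i ≤ K j), f i = (f j).comp (Subalgebra.inclusion h) := by
      intro i j h
      apply AlgHom.ext
      rintro ⟨v, hv⟩
      have hvj : v ∈ Ln j := h hv
      apply Subtype.coe_injective
      show ((ε i (g i) ⟨v, hv⟩ : Ln i) : Ω) = ((ε j (g j) ⟨v, hvj⟩ : Ln j) : Ω)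
      rw [agree i (max i j) (le_max_left i j) v hv,
        agree j (max i j) (le_max_right i j) v hvj]
    have hT : (⨆ n, Ln n : IntermediateField k Ω).toSubalgebra = ⨆ n, K n :=
      IntermediateField.toSubalgebra_iSup_of_directed hmono.directed_le
    let σ0 : ↥(⨆ n, Ln n) →ₐ[k] ↥(⨆ n, Ln n) :=
      Subalgebra.iSupLift K dir f hf (⨆ n, Ln n : IntermediateField k Ω).toSubalgebra hT.le
    have hσ0 : ∀ (n : ℕ) (v : Ω) (hv : v ∈ Ln n),
        σ0 ⟨v, hle n hv⟩ = IntermediateField.inclusion (hle n) ((ε n (g n)) ⟨v, hv⟩) := by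
      intro n v hv
      have hKT : K n ≤ (⨆ n, Ln n : IntermediateField k Ω).toSubalgebra := fun x hx => hle n hx
      have : (⟨v, hle n hv⟩ : ↥(⨆ n, Ln n)) = Subalgebra.inclusion hKT ⟨v, hv⟩ := rfl
      rw [this]
      exact Subalgebra.iSupLift_inclusion (K := K) (i := n) ⟨v, hv⟩ hKT
    have hσ0surj : Function.Surjective σ0 := by
      rintro ⟨x, hx⟩
      obtain ⟨n, hn⟩ := hmem_sup x hx
      set w := (ε n (g n)).symm ⟨x, hn⟩ with hw
      refine ⟨⟨(w : Ω), hle n w.2⟩, ?_⟩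
      rw [hσ0 n (w : Ω) w.2]
      apply Subtype.coe_injective
      show ((IntermediateField.inclusion (hle n) ((ε n (g n)) ⟨(w : Ω), w.2⟩) : ↥(⨆ n, Ln n)) : Ω)
        = ((⟨x, hx⟩ : ↥(⨆ n, Ln n)) : Ω)
      have h6 : (ε n (g n)) ⟨(w : Ω), w.2⟩ = ⟨x, hn⟩ := by
        have h5 : (⟨(w : Ω), w.2⟩ : Ln n) = w := rfl
        rw [h5, hw]
        exact (ε n (g n)).apply_symm_apply _
      rw [h6]
      rfl
    have hσ0inj : Function.Injective σ0 := σ0.toRingHom.injective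
    let σe : (↥(⨆ n, Ln n) ≃ₐ[k] ↥(⨆ n, Ln n)) :=
      AlgEquiv.ofBijective σ0 ⟨hσ0inj, hσ0surj⟩
    refine ⟨σe, ?_⟩
    funext n
    show (ε n).symm (resAut (hle n) σe) = g n
    rw [MulEquiv.symm_apply_eq]
    apply AlgEquiv.ext
    rintro ⟨v, hv⟩
    apply Subtype.coe_injective
    show ((resAut (hle n) σe ⟨v, hv⟩ : Ln n) : Ω) = ((ε n (g n) ⟨v, hv⟩ : Ln n) : Ω)
    rw [resAut_coe (hle n) σe v hv]
    have e3 : (σe ⟨v, hle n hv⟩ : ↥(⨆ n, Ln n)) = σ0 ⟨v, hle n hv⟩ := rfl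
    rw [e3, hσ0 n v hv]
    rfl
  -- assemble
  let Φ' : (↥(⨆ n, Ln n) ≃ₐ[k] ↥(⨆ n, Ln n)) →* inverseLimit G s :=
    Φ.codRestrict _ hΦmem
  refine ⟨MulEquiv.ofBijective Φ' ⟨?_, ?_⟩⟩
  · intro σ τ h
    exact hΦinj (congrArg Subtype.val h)
  · rintro ⟨g, hg⟩
    obtain ⟨σ, hσ⟩ := hΦsurj g hg
    exact ⟨σ, Subtype.ext hσ⟩

section KeyStep
variable {k : Type*} [Field k] {H : Type*} [DivisionRing H] [Algebra k H]
  {Ω : Type*} [Field Ω] [Algebra k Ω]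

attribute [local instance] Algebra.TensorProduct.rightAlgebra

theorem fixing_maps_right (E L' : IntermediateField k Ω) [Normal k E]
    [FiniteDimensional k E] (hEL : E ≤ L') (h10 : (1 : H ⊗[k] ↥L') ≠ 0)
    (hM : ∀ x : H ⊗[k] ↥L', x ≠ 0 → IsUnit x)
    (η : RingAut (H ⊗[k] ↥L'))
    (hη : ∀ a : H, η (Algebra.TensorProduct.includeLeftRingHom a)
      = Algebra.TensorProduct.includeLeftRingHom a)
    (b : ↥L') (hb : (b : Ω) ∈ E) :
    ∃ r : ↥L', η ((1 : H) ⊗ₜ[k] b) = (1 : H) ⊗ₜ[k] r := by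
  have halg : ∀ c : k, @algebraMap k (H ⊗[k] ↥L') _ Algebra.TensorProduct.instSemiring _ c = (1 : H) ⊗ₜ[k] (algebraMap k ↥L' c) := by
    intro c
    show (algebraMap k H c) ⊗ₜ[k] (1 : ↥L') = (1 : H) ⊗ₜ[k] (algebraMap k ↥L' c)
    rw [Algebra.algebraMap_eq_smul_one, Algebra.algebraMap_eq_smul_one (A := ↥L'),
      TensorProduct.smul_tmul]
  haveI : IsScalarTower k ↥L' (H ⊗[k] ↥L') :=
    IsScalarTower.of_algebraMap_eq (R := k) (S := ↥L') (A := H ⊗[k] ↥L') fun c => by rw [halg c]; rfl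
  have hηk : ∀ c : k, η (@algebraMap k (H ⊗[k] ↥L') _ Algebra.TensorProduct.instSemiring _ c) = @algebraMap k (H ⊗[k] ↥L') _ Algebra.TensorProduct.instSemiring _ c := by
    intro c
    have e : @algebraMap k (H ⊗[k] ↥L') _ Algebra.TensorProduct.instSemiring _ c
        = Algebra.TensorProduct.includeLeftRingHom (algebraMap k H c) := rfl
    rw [e]
    exact hη _
  let ηa : (H ⊗[k] ↥L') ≃ₐ[k] (H ⊗[k] ↥L') := AlgEquiv.ofRingEquiv (f := η) hηk
  set z : ↥E := ⟨(b : Ω), hb⟩ with hzdef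
  have hint : IsIntegral k z := IsIntegral.of_finite k z
  set p := minpoly k z with hpdef
  let ι : ↥E →ₐ[k] ↥L' := IntermediateField.inclusion hEL
  have hιz : ι z = b := rfl
  have haev : Polynomial.aeval b p = 0 := by
    rw [← hιz, Polynomial.aeval_algHom_apply ι z p, minpoly.aeval, map_zero]
  have hsp : (p.map (algebraMap k ↥L')).Splits := by
    have h1 : (p.map (algebraMap k ↥E)).Splits := Normal.splits inferInstance z
    have h2 := h1.map ι.toRingHom
    rw [Polynomial.map_map] at h2
    have e4 : (ι.toRingHom).comp (algebraMap k ↥E) = algebraMap k ↥L' :=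
      RingHom.ext fun c => rfl
    rwa [e4] at h2
  set q := p.map (algebraMap k ↥L') with hqdef
  have hq : q = (q.roots.map fun a => Polynomial.X - Polynomial.C a).prod :=
    Polynomial.Splits.eq_prod_roots_of_monic hsp ((minpoly.monic hint).map _)
  set y : H ⊗[k] ↥L' := η ((1 : H) ⊗ₜ[k] b) with hydef
  have h0 : Polynomial.aeval y p = 0 := by
    have e1 : y = ηa ((Algebra.TensorProduct.includeRight : ↥L' →ₐ[k] H ⊗[k] ↥L') b) := rfl
    rw [e1, Polynomial.aeval_algHom_apply ηa _ p,
      Polynomial.aeval_algHom_apply (Algebra.TensorProduct.includeRight :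
        ↥L' →ₐ[k] H ⊗[k] ↥L') b p, haev, map_zero, map_zero]
  have h1 : Polynomial.aeval y q = 0 := by
    rw [hqdef, Polynomial.aeval_map_algebraMap]
    exact h0
  set l : List ↥L' := q.roots.toList with hldef
  have hql : q = (l.map fun a => Polynomial.X - Polynomial.C a).prod := by
    rw [hq, ← Multiset.coe_toList q.roots, Multiset.map_coe, Multiset.prod_coe]
  have maplist := map_list_prod
    ((Polynomial.aeval y : Polynomial ↥L' →ₐ[↥L'] H ⊗[k] ↥L').toRingHom)
    (l.map fun a => Polynomial.X - Polynomial.C a)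
  have h2 : (l.map fun a => y - @algebraMap ↥L' (H ⊗[k] ↥L') _ Algebra.TensorProduct.instSemiring _ a).prod = 0 := by
    rw [← h1]
    conv_rhs => rw [hql]
    calc (l.map fun a => y - @algebraMap ↥L' (H ⊗[k] ↥L') _ Algebra.TensorProduct.instSemiring _ a).prod
        = ((l.map fun a => Polynomial.X - Polynomial.C a).map
            (Polynomial.aeval y : Polynomial ↥L' →ₐ[↥L'] H ⊗[k] ↥L').toRingHom).prod := by
          rw [List.map_map]
          congr 1
          apply List.map_congr_left
          intro a _
          show y - @algebraMap ↥L' (H ⊗[k] ↥L') _ Algebra.TensorProduct.instSemiring _ a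
            = (Polynomial.aeval y : Polynomial ↥L' →ₐ[↥L'] H ⊗[k] ↥L').toRingHom
                (Polynomial.X - Polynomial.C a)
          rw [map_sub]
          show y - @algebraMap ↥L' (H ⊗[k] ↥L') _ Algebra.TensorProduct.instSemiring _ a
            = Polynomial.aeval y Polynomial.X - Polynomial.aeval y (Polynomial.C a)
          rw [Polynomial.aeval_X, Polynomial.aeval_C]
      _ = Polynomial.aeval y ((l.map fun a => Polynomial.X - Polynomial.C a).prod) :=
          maplist.symm
  have zeroprod : ∀ (t : List ↥L'),
      (t.map fun a => y - @algebraMap ↥L' (H ⊗[k] ↥L') _ Algebra.TensorProduct.instSemiring _ a).prod = 0 →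
      ∃ a ∈ t, y = @algebraMap ↥L' (H ⊗[k] ↥L') _ Algebra.TensorProduct.instSemiring _ a := by
    intro t
    induction t with
    | nil =>
        intro h
        simp only [List.map_nil, List.prod_nil] at h
        exact absurd h h10
    | cons a t ih =>
        intro h
        rw [List.map_cons, List.prod_cons] at h
        by_cases hya : y - @algebraMap ↥L' (H ⊗[k] ↥L') _ Algebra.TensorProduct.instSemiring _ a = 0
        · exact ⟨a, List.mem_cons_self (a := a) (l := t), by rwa [sub_eq_zero] at hya⟩
        · have hu := hM _ hya
          have h5 : (t.map fun a => y - @algebraMap ↥L' (H ⊗[k] ↥L') _ Algebra.TensorProduct.instSemiring _ a).prod = 0 :=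
            hu.mul_left_cancel (by
              rw [h]
              exact (mul_zero (y - @algebraMap ↥L' (H ⊗[k] ↥L') _ Algebra.TensorProduct.instSemiring _ a)).symm)
          obtain ⟨a', ha', he⟩ := ih h5
          exact ⟨a', List.mem_cons_of_mem _ ha', he⟩
  obtain ⟨r, _, hr⟩ := zeroprod _ h2
  exact ⟨r, hr⟩

end KeyStep


section PartB
variable {k : Type*} [Field k] {H : Type*} [DivisionRing H] [Algebra k H]

theorem one_tmul_injective {B : Type*} [CommRing B] [Algebra k B] :
    Function.Injective (fun b : B => ((1 : H) ⊗ₜ[k] b : H ⊗[k] B)) := by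
  have h1 : Function.Injective (Algebra.linearMap k H) := fun a b hab => by
    exact (algebraMap k H).injective hab
  have h2 : Function.Injective (LinearMap.rTensor B (Algebra.linearMap k H)) :=
    Module.Flat.rTensor_preserves_injective_linearMap _ h1
  have key : (fun b : B => ((1 : H) ⊗ₜ[k] b : H ⊗[k] B)) =
      (LinearMap.rTensor B (Algebra.linearMap k H)) ∘ ((TensorProduct.lid k B).symm) := by
    funext b
    simp
  rw [key]
  exact h2.comp (TensorProduct.lid k B).symm.injective

theorem tensorAut {Ω : Type*} [Field Ω] [Algebra k Ω]
    (Ln : ℕ → IntermediateField k Ω) (hmono : Monotone Ln)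
    (hgal : ∀ n, IsGalois k (Ln n)) (hfin : ∀ n, FiniteDimensional k (Ln n))
    (hM : ∀ x : H ⊗[k] ↥(⨆ n, Ln n), x ≠ 0 → IsUnit x) :
    Nonempty ((↥(⨆ n, Ln n) ≃ₐ[k] ↥(⨆ n, Ln n)) ≃*
      (fixingAutGroup (Algebra.TensorProduct.includeLeftRingHom :
        H →+* H ⊗[k] ↥(⨆ n, Ln n)))) := by
  haveI : ∀ n, Normal k (Ln n) := fun n => (hgal n).to_normal
  haveI : ∀ n, FiniteDimensional k (Ln n) := hfin
  have hle : ∀ n, Ln n ≤ ⨆ n, Ln n := fun n => le_iSup Ln n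
  have hmem_sup : ∀ x : Ω, x ∈ (⨆ n, Ln n : IntermediateField k Ω) → ∃ n, x ∈ Ln n := by
    intro x hx
    have : x ∈ (⋃ n, (Ln n : Set Ω)) := by
      rwa [← IntermediateField.coe_iSup_of_directed hmono.directed_le]
    obtain ⟨_, ⟨n, rfl⟩, hn⟩ := this
    exact ⟨n, hn⟩
  set L : IntermediateField k Ω := ⨆ n, Ln n with hLdef
  -- basic injectivity and nontriviality
  have hinj : Function.Injective (fun b : ↥L => ((1 : H) ⊗ₜ[k] b : H ⊗[k] ↥L)) :=
    one_tmul_injective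
  have h10 : (1 : H ⊗[k] ↥L) ≠ 0 := by
    intro h
    have h2 : ((1 : H) ⊗ₜ[k] (1 : ↥L) : H ⊗[k] ↥L) = (1 : H) ⊗ₜ[k] (0 : ↥L) := by
      rw [← Algebra.TensorProduct.one_def, h, TensorProduct.tmul_zero]
    exact one_ne_zero (hinj h2)
  -- scalar tower
  have halg : ∀ c : k, @algebraMap k (H ⊗[k] ↥L) _ Algebra.TensorProduct.instSemiring _ c = (1 : H) ⊗ₜ[k] (algebraMap k ↥L c) := by
    intro c
    show (algebraMap k H c) ⊗ₜ[k] (1 : ↥L) = (1 : H) ⊗ₜ[k] (algebraMap k ↥L c)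
    rw [Algebra.algebraMap_eq_smul_one, Algebra.algebraMap_eq_smul_one (A := ↥L),
      TensorProduct.smul_tmul]
  -- the forward map
  let Ψfun : (↥L ≃ₐ[k] ↥L) → RingAut (H ⊗[k] ↥L) := fun σ =>
    (Algebra.TensorProduct.congr (AlgEquiv.refl (R := k) (A₁ := H)) σ).toRingEquiv
  have hΨtmul : ∀ (σ : ↥L ≃ₐ[k] ↥L) (a : H) (b : ↥L),
      Ψfun σ (a ⊗ₜ[k] b) = a ⊗ₜ[k] σ b := fun σ a b => rfl
  have hΨmul : ∀ σ τ, Ψfun (σ * τ) = Ψfun σ * Ψfun τ := by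
    intro σ τ
    apply RingEquiv.ext
    intro x
    show Ψfun (σ * τ) x = Ψfun σ (Ψfun τ x)
    induction x using TensorProduct.induction_on with
    | zero => simp only [map_zero]
    | tmul a b => rfl
    | add u v hu hv => rw [map_add, map_add, map_add, hu, hv]
  have hΨmem : ∀ σ, Ψfun σ ∈ fixingAutGroup (Algebra.TensorProduct.includeLeftRingHom :
      H →+* H ⊗[k] ↥L) := by
    intro σ a
    show Ψfun σ (a ⊗ₜ[k] (1 : ↥L)) = a ⊗ₜ[k] (1 : ↥L)
    rw [hΨtmul, map_one]
  let Ψ : (↥L ≃ₐ[k] ↥L) →* (fixingAutGroup (Algebra.TensorProduct.includeLeftRingHom :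
      H →+* H ⊗[k] ↥L)) :=
    MonoidHom.codRestrict (MonoidHom.mk' Ψfun hΨmul) _ hΨmem
  -- key: any fixing automorphism maps 1 ⊗ L into 1 ⊗ L
  have key : ∀ (η : RingAut (H ⊗[k] ↥L)),
      (∀ a : H, η (Algebra.TensorProduct.includeLeftRingHom a)
        = Algebra.TensorProduct.includeLeftRingHom a) →
      ∀ b : ↥L, ∃ r : ↥L, η ((1 : H) ⊗ₜ[k] b) = (1 : H) ⊗ₜ[k] r := by
    intro η hη b
    obtain ⟨n, hn⟩ := hmem_sup (b : Ω) b.2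
    exact fixing_maps_right (Ln n) L (hle n) h10 hM η hη b hn
  -- injectivity of Ψ
  have hΨinj : Function.Injective Ψ := by
    intro σ τ h
    apply AlgEquiv.ext
    intro b
    apply hinj
    show (1 : H) ⊗ₜ[k] σ b = (1 : H) ⊗ₜ[k] τ b
    have h1 : Ψfun σ ((1 : H) ⊗ₜ[k] b) = Ψfun τ ((1 : H) ⊗ₜ[k] b) := by
      have := congrArg Subtype.val h
      exact congrFun (congrArg (fun (e : RingAut (H ⊗[k] ↥L)) => (e : H ⊗[k] ↥L → H ⊗[k] ↥L))
        this) _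
    rwa [hΨtmul, hΨtmul] at h1
  -- surjectivity of Ψ
  have hΨsurj : Function.Surjective Ψ := by
    rintro ⟨η, hη⟩
    have hη' : ∀ a : H, η (Algebra.TensorProduct.includeLeftRingHom a)
        = Algebra.TensorProduct.includeLeftRingHom a := hη
    have hηinv : ∀ a : H, η.symm (Algebra.TensorProduct.includeLeftRingHom a)
        = Algebra.TensorProduct.includeLeftRingHom a := by
      intro a
      conv_lhs => rw [← hη' a]
      exact η.symm_apply_apply _
    choose F hF using key η hη'
    choose Finv hFinv using key η.symm hηinv
    have hcomm : ∀ c : k, (1 : H) ⊗ₜ[k] (algebraMap k ↥L c)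
        = algebraMap k (H ⊗[k] ↥L) c := fun c => (halg c).symm
    -- F is an algebra homomorphism
    have hF1 : F 1 = 1 := by
      apply hinj
      show (1 : H) ⊗ₜ[k] F 1 = (1 : H) ⊗ₜ[k] (1 : ↥L)
      rw [← hF 1, ← Algebra.TensorProduct.one_def, map_one, Algebra.TensorProduct.one_def]
    have hFmul : ∀ x y : ↥L, F (x * y) = F x * F y := by
      intro x y
      apply hinj
      show (1 : H) ⊗ₜ[k] F (x * y) = (1 : H) ⊗ₜ[k] (F x * F y)
      rw [← hF (x * y)]
      have : (1 : H) ⊗ₜ[k] (x * y) = ((1 : H) ⊗ₜ[k] x) * ((1 : H) ⊗ₜ[k] y) := by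
        rw [Algebra.TensorProduct.tmul_mul_tmul, one_mul]
      rw [this, map_mul, hF x, hF y, Algebra.TensorProduct.tmul_mul_tmul, one_mul]
    have hFadd : ∀ x y : ↥L, F (x + y) = F x + F y := by
      intro x y
      apply hinj
      show (1 : H) ⊗ₜ[k] F (x + y) = (1 : H) ⊗ₜ[k] (F x + F y)
      rw [← hF (x + y), TensorProduct.tmul_add, map_add, hF x, hF y, TensorProduct.tmul_add]
    have hFcomm : ∀ c : k, F (algebraMap k ↥L c) = algebraMap k ↥L c := by
      intro c
      apply hinj
      show (1 : H) ⊗ₜ[k] F (algebraMap k ↥L c) = (1 : H) ⊗ₜ[k] (algebraMap k ↥L c)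
      rw [← hF _, hcomm c]
      have hηk : η (@algebraMap k (H ⊗[k] ↥L) _ Algebra.TensorProduct.instSemiring _ c) = @algebraMap k (H ⊗[k] ↥L) _ Algebra.TensorProduct.instSemiring _ c := by
        have e : @algebraMap k (H ⊗[k] ↥L) _ Algebra.TensorProduct.instSemiring _ c
            = Algebra.TensorProduct.includeLeftRingHom (algebraMap k H c) := rfl
        rw [e]
        exact hη' _
      rw [hηk, ← hcomm c]
    have hF0 : F 0 = 0 := by
      apply hinj
      show (1 : H) ⊗ₜ[k] F 0 = (1 : H) ⊗ₜ[k] (0 : ↥L)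
      rw [← hF 0, show ((1 : H) ⊗ₜ[k] (0 : ↥L) : H ⊗[k] ↥L) = 0 from
        TensorProduct.tmul_zero _ _, map_zero]
    -- the inverse map is also an algebra homomorphism (we only need it as a function)
    have hright : ∀ b : ↥L, F (Finv b) = b := by
      intro b
      apply hinj
      show (1 : H) ⊗ₜ[k] F (Finv b) = (1 : H) ⊗ₜ[k] b
      rw [← hF (Finv b), ← hFinv b, η.apply_symm_apply]
    have hleft : ∀ b : ↥L, Finv (F b) = b := by
      intro b
      apply hinj
      show (1 : H) ⊗ₜ[k] Finv (F b) = (1 : H) ⊗ₜ[k] b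
      rw [← hFinv (F b), ← hF b, η.symm_apply_apply]
    let σ0 : ↥L →ₐ[k] ↥L :=
      { toFun := F
        map_one' := hF1
        map_mul' := hFmul
        map_zero' := hF0
        map_add' := hFadd
        commutes' := hFcomm }
    have hσ0bij : Function.Bijective σ0 :=
      ⟨fun x y hxy => by
        have h5 : F x = F y := hxy
        have h6 := congrArg Finv h5
        rwa [hleft, hleft] at h6,
       fun y => ⟨Finv y, hright y⟩⟩
    let σe : ↥L ≃ₐ[k] ↥L := AlgEquiv.ofBijective σ0 hσ0bij
    refine ⟨σe, ?_⟩
    apply Subtype.ext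
    show Ψfun σe = η
    apply RingEquiv.ext
    intro x
    induction x using TensorProduct.induction_on with
    | zero => rw [map_zero, map_zero]
    | tmul a b =>
        have e1 : Ψfun σe (a ⊗ₜ[k] b) = a ⊗ₜ[k] F b := rfl
        have e2 : (a ⊗ₜ[k] b : H ⊗[k] ↥L)
            = (a ⊗ₜ[k] (1 : ↥L)) * ((1 : H) ⊗ₜ[k] b) := by
          rw [Algebra.TensorProduct.tmul_mul_tmul, mul_one, one_mul]
        rw [e1, e2, map_mul]
        have e3 : η (a ⊗ₜ[k] (1 : ↥L)) = a ⊗ₜ[k] (1 : ↥L) := hη' a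
        rw [e3, hF b, Algebra.TensorProduct.tmul_mul_tmul, mul_one, one_mul]
    | add u v hu hv => rw [map_add, map_add, hu, hv]
  exact ⟨MulEquiv.ofBijective Ψ ⟨hΨinj, hΨsurj⟩⟩

end PartB

/-- Let `H` be a division ring, `k` a field contained in the center of `H`,
and `(Gₙ, sₙ)` a complete system of finite groups.  Let `(Lₙ)` be an increasing tower of
finite Galois extensions of `k` (inside a common extension `Ω`), with isomorphisms
`εₙ : Gₙ ≃* Gal(Lₙ/k)` compatible with the `sₙ` and the restriction epimorphisms, and let
`L = ⋃ₙ Lₙ = ⨆ₙ Lₙ`.  If `H ⊗[k] Lₙ` is a division ring for every `n`, then `M = H ⊗[k] L`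
is a division ring and the group of ring automorphisms of `M` fixing `H ⊗ 1` pointwise
(the image of the canonical map `H →+* M`, `h ↦ h ⊗ 1`) is isomorphic to the inverse limit
`lim← Gₙ` of the system `(Gₙ, sₙ)`. -/
theorem stmt11 (H k Ω : Type*) [DivisionRing H] [Field k] [Algebra k H]
    [Field Ω] [Algebra k Ω]
    (G : ℕ → Type*) [∀ n, Group (G n)] [∀ n, Finite (G n)]
    (s : ∀ n, G (n + 1) →* G n) (hs : ∀ n, Function.Surjective (s n))
    (Ln : ℕ → IntermediateField k Ω) (hmono : Monotone Ln)
    (hgal : ∀ n, IsGalois k (Ln n)) (hfin : ∀ n, FiniteDimensional k (Ln n))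
    (ε : ∀ n, G n ≃* ((Ln n) ≃ₐ[k] (Ln n)))
    (hε : ∀ (n : ℕ) (g : G (n + 1)) (x : Ω) (hx : x ∈ Ln n),
      ((ε n (s n g) ⟨x, hx⟩ : Ln n) : Ω)
        = ((ε (n + 1) g ⟨x, hmono (Nat.le_succ n) hx⟩ : Ln (n + 1)) : Ω))
    (hdiv : ∀ n, ∀ x : H ⊗[k] (Ln n), x ≠ 0 → IsUnit x) :
    (∀ x : H ⊗[k] ↥(⨆ n, Ln n), x ≠ 0 → IsUnit x) ∧
    Nonempty
      ((fixingAutGroup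
          (Algebra.TensorProduct.includeLeftRingHom :
            H →+* H ⊗[k] ↥(⨆ n, Ln n)))
        ≃* (inverseLimit G s)) := by
  have hdiv' : ∀ x : H ⊗[k] ↥(⨆ n, Ln n), x ≠ 0 → IsUnit x := div_aux Ln hmono hdiv
  obtain ⟨e1⟩ := tensorAut Ln hmono hgal hfin hdiv'
  obtain ⟨e2⟩ := galLimit G s Ln hmono hgal ε hε
  exact ⟨hdiv', ⟨e1.symm.trans e2⟩⟩
end
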